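/- arXiv:1611.05342 — 3 statements merged into one kernel-verified Lean document; each statement's English description precedes it below -/
import Mathlib

section
/- Every monotone submodular function v : 2^[k] → ℝ≥0 with v(∅)=0 is XOS: v equals the pointwise maximum of the finite collection of additive functions {a_T}_{T⊆[k]} where for each ordering of T, a_T assigns to each element its marginal contribution. -/
def IsAdditive (k : ℕ) (v : Finset (Fin k) → ℝ) : Prop :=
  ∃ α : Fin k → ℝ, (∀ j, 0 ≤ α j) ∧ ∀ S, v S = ∑ j ∈ S, α j

def IsXOS (k : ℕ) (v : Finset (Fin k) → ℝ) : Prop :=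
  ∃ (d : ℕ) (a : Fin (d + 1) → Finset (Fin k) → ℝ),
    (∀ i, IsAdditive k (a i)) ∧
    ∀ S, v S = Finset.univ.sup' ⟨0, Finset.mem_univ 0⟩ (fun i => a i S)

def IsSubmodular (k : ℕ) (v : Finset (Fin k) → ℝ) : Prop :=
  ∀ S T : Finset (Fin k), S ⊆ T → ∀ x ∉ T,
    v (insert x T) - v T ≤ v (insert x S) - v S

noncomputable def marg (k : ℕ) (v : Finset (Fin k) → ℝ) (T : Finset (Fin k)) (j : Fin k) : ℝ :=
  if j ∈ T then v (T ∩ Finset.Iic j) - v (T ∩ Finset.Iio j) else 0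

lemma marg_nonneg (k : ℕ) (v : Finset (Fin k) → ℝ)
    (hmono : ∀ S T : Finset (Fin k), S ⊆ T → v S ≤ v T) (T : Finset (Fin k)) (j : Fin k) :
    0 ≤ marg k v T j := by
  unfold marg
  split
  · have : T ∩ Finset.Iio j ⊆ T ∩ Finset.Iic j :=
      Finset.inter_subset_inter_left (Finset.Iio_subset_Iic_self)
    linarith [hmono _ _ this]
  · exact le_refl 0

lemma marg_insert_of_lt (k : ℕ) (v : Finset (Fin k) → ℝ) (a : Fin k) (s : Finset (Fin k))
    (hlt : ∀ x ∈ s, x < a) (j : Fin k) (hj : j ∈ s) :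
    marg k v (insert a s) j = marg k v s j := by
  have hja : j < a := hlt j hj
  have h1 : a ∉ Finset.Iic j := by simp only [Finset.mem_Iic]; exact not_le.mpr hja
  have h2 : a ∉ Finset.Iio j := by simp only [Finset.mem_Iio]; exact not_lt.mpr hja.le
  unfold marg
  rw [Finset.insert_inter_of_notMem h1, Finset.insert_inter_of_notMem h2]
  simp [hj, Finset.mem_insert]

lemma marg_top (k : ℕ) (v : Finset (Fin k) → ℝ) (a : Fin k) (s : Finset (Fin k))
    (hlt : ∀ x ∈ s, x < a) :
    marg k v (insert a s) a = v (insert a s) - v s := by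
  have ha : a ∉ s := fun h => lt_irrefl a (hlt a h)
  have h1 : insert a s ∩ Finset.Iic a = insert a s := by
    apply Finset.inter_eq_left.mpr
    intro x hx
    rcases Finset.mem_insert.mp hx with h | h
    · simp [h]
    · exact Finset.mem_Iic.mpr (hlt x h).le
  have h2 : insert a s ∩ Finset.Iio a = s := by
    ext x
    simp only [Finset.mem_inter, Finset.mem_insert, Finset.mem_Iio]
    constructor
    · rintro ⟨h | h, hx⟩
      · exact absurd hx (by simp [h])
      · exact h
    · intro h; exact ⟨Or.inr h, hlt x h⟩
  unfold marg
  simp [h1, h2]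

lemma sum_marg_self (k : ℕ) (v : Finset (Fin k) → ℝ) (hzero : v ∅ = 0) :
    ∀ T : Finset (Fin k), ∑ j ∈ T, marg k v T j = v T := by
  intro T
  induction T using Finset.induction_on_max with
  | empty => simp [hzero]
  | insert a s hlt ih =>
    have ha : a ∉ s := fun h => lt_irrefl a (hlt a h)
    rw [Finset.sum_insert ha]
    have : ∑ j ∈ s, marg k v (insert a s) j = ∑ j ∈ s, marg k v s j :=
      Finset.sum_congr rfl (fun j hj => marg_insert_of_lt k v a s hlt j hj)
    rw [this, ih, marg_top k v a s hlt]
    ring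

lemma sum_marg_le (k : ℕ) (v : Finset (Fin k) → ℝ)
    (hmono : ∀ S T : Finset (Fin k), S ⊆ T → v S ≤ v T)
    (hsubmod : IsSubmodular k v) (hzero : v ∅ = 0) (T : Finset (Fin k)) :
    ∀ S : Finset (Fin k), ∑ j ∈ S, marg k v T j ≤ v (S ∩ T) := by
  intro S
  induction S using Finset.induction_on_max with
  | empty => simp [hzero]
  | insert a s hlt ih =>
    have ha : a ∉ s := fun h => lt_irrefl a (hlt a h)
    rw [Finset.sum_insert ha]
    by_cases haT : a ∈ T
    · have hkey : marg k v T a ≤ v (insert a s ∩ T) - v (s ∩ T) := by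
        have hsub : s ∩ T ⊆ T ∩ Finset.Iio a := by
          intro x hx
          simp only [Finset.mem_inter, Finset.mem_Iio] at *
          exact ⟨hx.2, hlt x hx.1⟩
        have haIio : a ∉ T ∩ Finset.Iio a := by simp [Finset.mem_Iio]
        have h := hsubmod (s ∩ T) (T ∩ Finset.Iio a) hsub a haIio
        have h1 : insert a (T ∩ Finset.Iio a) = T ∩ Finset.Iic a := by
          ext x
          simp only [Finset.mem_insert, Finset.mem_inter, Finset.mem_Iio, Finset.mem_Iic]
          constructor
          · rintro (rfl | ⟨hx, hx2⟩)
            · exact ⟨haT, le_refl _⟩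
            · exact ⟨hx, hx2.le⟩
          · rintro ⟨hx, hx2⟩
            rcases lt_or_eq_of_le hx2 with h | h
            · exact Or.inr ⟨hx, h⟩
            · exact Or.inl h
        have h2 : insert a (s ∩ T) = insert a s ∩ T := by
          rw [Finset.insert_inter_of_mem haT]
        rw [h1, h2] at h
        unfold marg
        simp only [haT, if_true]
        exact h
      have hs : ∑ j ∈ s, marg k v T j ≤ v (s ∩ T) := ih
      linarith
    · have : marg k v T a = 0 := by unfold marg; simp [haT]
      rw [this]
      have heq : insert a s ∩ T = s ∩ T := by
        rw [Finset.insert_inter_of_notMem haT]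
      rw [heq]
      linarith [ih]

/-- every monotone submodular function with `v ∅ = 0` is XOS. -/
theorem monotone_submodular_isXOS (k : ℕ) (v : Finset (Fin k) → ℝ)
    (hnonneg : ∀ S, 0 ≤ v S)
    (hmono : ∀ S T : Finset (Fin k), S ⊆ T → v S ≤ v T)
    (hsubmod : IsSubmodular k v)
    (hzero : v ∅ = 0) :
    IsXOS k v := by
  classical
  have hcard : (2 ^ k - 1) + 1 = Fintype.card (Finset (Fin k)) := by
    rw [Fintype.card_finset, Fintype.card_fin]
    have : 0 < 2 ^ k := Nat.pow_pos (by norm_num)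
    omega
  set e : Fin (2 ^ k - 1 + 1) → Finset (Fin k) :=
    fun i => (Fintype.equivFin (Finset (Fin k))).symm (Fin.cast hcard i) with he
  refine ⟨2 ^ k - 1, fun i S => ∑ j ∈ S, marg k v (e i) j, ?_, ?_⟩
  · intro i
    exact ⟨marg k v (e i), marg_nonneg k v hmono (e i), fun S => rfl⟩
  · intro S
    apply le_antisymm
    · set i0 : Fin (2 ^ k - 1 + 1) :=
        Fin.cast hcard.symm (Fintype.equivFin (Finset (Fin k)) S) with hi0
      have hei0 : e i0 = S := by
        simp [he, hi0]
      have := Finset.le_sup' (fun i => ∑ j ∈ S, marg k v (e i) j)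
        (Finset.mem_univ i0)
      calc v S = ∑ j ∈ S, marg k v (e i0) j := by rw [hei0, sum_marg_self k v hzero]
        _ ≤ _ := this
    · apply Finset.sup'_le
      intro i _
      calc ∑ j ∈ S, marg k v (e i) j ≤ v (S ∩ e i) :=
              sum_marg_le k v hmono hsubmod hzero (e i) S
        _ ≤ v S := hmono _ _ (Finset.inter_subset_left)
end

section
/- Let v : 2^[k] → ℝ≥0 be subadditive, X ⊆ [k] partitioned into X_1,...,X_m, p ∈ ℝ^k a price vector, and z_1,...,z_m independent Bernoulli(1/2) variables with X(z) := ⋃_{j : z_j=1} X_j. Then E_z[ v(X(z)) − Σ_{ℓ∈X(z)} p_ℓ ] ≥ (1/2)·( v(X) − Σ_{ℓ∈X} p_ℓ ). -/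
/-- subadditive valuation with item prices under random
availability: `E_z[v(X(z)) − Σ_{ℓ∈X(z)} p_ℓ] ≥ (1/2)(v(X) − Σ_{ℓ∈X} p_ℓ)`. -/
theorem subadditive_random_half_utility (k m : ℕ) (v : Finset (Fin k) → ℝ)
    (hnonneg : ∀ S, 0 ≤ v S)
    (hsub : ∀ S T : Finset (Fin k), v (S ∪ T) ≤ v S + v T)
    (p : Fin k → ℝ)
    (X : Finset (Fin k)) (Xpart : Fin m → Finset (Fin k))
    (hdisj : ∀ j j' : Fin m, j ≠ j' → Disjoint (Xpart j) (Xpart j'))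
    (hcover : Finset.univ.biUnion Xpart = X) :
    (1 / 2 ^ m : ℝ) *
        ∑ z : Fin m → Bool,
          (v (Finset.univ.biUnion fun j => if z j then Xpart j else ∅) -
            ∑ ℓ ∈ Finset.univ.biUnion fun j => if z j then Xpart j else ∅, p ℓ) ≥
      (1 / 2) * (v X - ∑ ℓ ∈ X, p ℓ) := by
  classical
  set S : (Fin m → Bool) → Finset (Fin k) :=
    fun z => Finset.univ.biUnion fun j => if z j then Xpart j else ∅ with hS
  set f : (Fin m → Bool) → ℝ := fun z => v (S z) - ∑ ℓ ∈ S z, p ℓ with hf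
  set neg : (Fin m → Bool) → (Fin m → Bool) := fun z j => !z j with hneg
  have hunion : ∀ z, S z ∪ S (neg z) = X := by
    intro z
    rw [← hcover]
    ext x
    simp only [hS, hneg, Finset.mem_union, Finset.mem_biUnion, Finset.mem_univ, true_and]
    constructor
    · rintro (⟨j, hj⟩ | ⟨j, hj⟩) <;>
      · split at hj
        · exact ⟨j, hj⟩
        · simp at hj
    · rintro ⟨j, hj⟩
      cases hz : z j
      · right; exact ⟨j, by simp [hz, hj]⟩
      · left; exact ⟨j, by simp [hz, hj]⟩
  have hdisjS : ∀ z, Disjoint (S z) (S (neg z)) := by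
    intro z
    rw [Finset.disjoint_left]
    intro x hx hx'
    simp only [hS, hneg, Finset.mem_biUnion, Finset.mem_univ, true_and] at hx hx'
    obtain ⟨j, hj⟩ := hx
    obtain ⟨j', hj'⟩ := hx'
    cases hzj : z j with
    | false => simp [hzj] at hj
    | true =>
      cases hzj' : z j' with
      | true => simp [hzj'] at hj'
      | false =>
        simp only [hzj, if_true] at hj
        simp only [hzj', Bool.not_false, if_true] at hj'
        have hne : j ≠ j' := by
          intro h; rw [h, hzj'] at hzj; exact Bool.noConfusion hzj
        exact Finset.disjoint_left.mp (hdisj j j' hne) hj hj'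
  have key : ∀ z, v X - ∑ ℓ ∈ X, p ℓ ≤ f z + f (neg z) := by
    intro z
    have h1 : v X ≤ v (S z) + v (S (neg z)) := by
      rw [← hunion z]; exact hsub _ _
    have h2 : (∑ ℓ ∈ X, p ℓ) = (∑ ℓ ∈ S z, p ℓ) + ∑ ℓ ∈ S (neg z), p ℓ := by
      rw [← hunion z, Finset.sum_union (hdisjS z)]
    simp only [hf]
    linarith
  -- sum over all z
  have hinv : Function.Involutive neg := by
    intro z; funext j; simp [hneg]
  have hsum_neg : (∑ z : Fin m → Bool, f (neg z)) = ∑ z : Fin m → Bool, f z :=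
    Equiv.sum_comp hinv.toPerm f
  have hcard : (Finset.univ : Finset (Fin m → Bool)).card = 2 ^ m := by
    simp [Fintype.card_fun]
  have hbig : (2 ^ m : ℝ) * (v X - ∑ ℓ ∈ X, p ℓ) ≤ 2 * ∑ z : Fin m → Bool, f z := by
    have := Finset.sum_le_sum (fun z (_ : z ∈ Finset.univ) => key z)
    rw [Finset.sum_add_distrib, hsum_neg, Finset.sum_const, hcard, nsmul_eq_mul] at this
    push_cast at this ⊢
    linarith
  have h2m : (0 : ℝ) < 2 ^ m := by positivity
  rw [ge_iff_le]
  have : (1 / 2 ^ m : ℝ) * ((2 ^ m : ℝ) * (v X - ∑ ℓ ∈ X, p ℓ)) ≤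
      (1 / 2 ^ m : ℝ) * (2 * ∑ z : Fin m → Bool, f z) := by
    apply mul_le_mul_of_nonneg_left hbig (by positivity)
  calc (1 / 2 : ℝ) * (v X - ∑ ℓ ∈ X, p ℓ)
      = (1 / 2 : ℝ) * ((1 / 2 ^ m : ℝ) * ((2 ^ m : ℝ) * (v X - ∑ ℓ ∈ X, p ℓ))) := by
        field_simp
    _ ≤ (1 / 2 : ℝ) * ((1 / 2 ^ m : ℝ) * (2 * ∑ z : Fin m → Bool, f z)) := by
        apply mul_le_mul_of_nonneg_left this (by norm_num)
    _ = (1 / 2 ^ m : ℝ) * ∑ z : Fin m → Bool, f z := by ring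
end

section
/- Let n ≥ 3 agents have subadditive valuations v_1,...,v_n : 2^[k] → ℝ≥0, let (X*_1,...,X*_n) be a partition of [k] maximizing Σ_i v_i(X*_i), and let (I_1,...,I_n) be any partition of [k] (the initial endowments). For each agent i, removing a uniformly random other agent j and her items yields allocation X*_i \ I_j. Then (1/n)·Σ_{i∈[n]} Σ_{j∈[n]\{i\}} v_j(X*_j \ I_i) ≥ ((n−1)/(2n))·Σ_{i∈[n]} v_i(X*_i). -/
/-- random-agent-removal welfare bound. With `n ≥ 3` subadditive
agents, an optimal partition `X*` of the items and any partition `I` of initial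
endowments, `(1/n)·Σ_i Σ_{j ≠ i} v_j(X*_j \ I_i) ≥ ((n−1)/(2n))·Σ_i v_i(X*_i)`. -/
theorem random_removal_welfare (n k : ℕ) (hn : 3 ≤ n)
    (v : Fin n → Finset (Fin k) → ℝ)
    (hnonneg : ∀ i S, 0 ≤ v i S)
    (hsub : ∀ i, ∀ S T : Finset (Fin k), v i (S ∪ T) ≤ v i S + v i T)
    (Xstar : Fin n → Finset (Fin k))
    (hXdisj : ∀ i i' : Fin n, i ≠ i' → Disjoint (Xstar i) (Xstar i'))
    (hXcover : Finset.univ.biUnion Xstar = Finset.univ)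
    (hXopt : ∀ Y : Fin n → Finset (Fin k),
      (∀ i i' : Fin n, i ≠ i' → Disjoint (Y i) (Y i')) →
      Finset.univ.biUnion Y = Finset.univ →
      ∑ i, v i (Y i) ≤ ∑ i, v i (Xstar i))
    (I : Fin n → Finset (Fin k))
    (hIdisj : ∀ i i' : Fin n, i ≠ i' → Disjoint (I i) (I i'))
    (hIcover : Finset.univ.biUnion I = Finset.univ) :
    (1 / n : ℝ) * ∑ i, ∑ j ∈ Finset.univ.erase i, v j (Xstar j \ I i) ≥
      ((n - 1 : ℝ) / (2 * n)) * ∑ i, v i (Xstar i) := by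
  have hn0 : (0:ℝ) < (n:ℝ) := by
    have : 0 < n := by omega
    exact_mod_cast this
  -- key subadditivity pair bound
  have key : ∀ j i i' : Fin n, i ≠ i' →
      v j (Xstar j) ≤ v j (Xstar j \ I i) + v j (Xstar j \ I i') := by
    intro j i i' hne
    have hu : (Xstar j \ I i) ∪ (Xstar j \ I i') = Xstar j := by
      ext x
      simp only [Finset.mem_union, Finset.mem_sdiff]
      constructor
      · rintro (⟨h, _⟩ | ⟨h, _⟩) <;> exact h
      · intro hx
        by_cases hxi : x ∈ I i
        · exact Or.inr ⟨hx, fun hxi' =>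
            Finset.disjoint_left.mp (hIdisj i i' hne) hxi hxi'⟩
        · exact Or.inl ⟨hx, hxi⟩
    calc v j (Xstar j) = v j ((Xstar j \ I i) ∪ (Xstar j \ I i')) := by rw [hu]
      _ ≤ _ := hsub j _ _
  -- per-agent bound
  have per : ∀ j : Fin n,
      ((n:ℝ) - 1) / 2 * v j (Xstar j) ≤ ∑ i ∈ Finset.univ.erase j, v j (Xstar j \ I i) := by
    intro j
    set S := (Finset.univ : Finset (Fin n)).erase j with hS
    set T := ∑ i ∈ S, v j (Xstar j \ I i) with hT
    set V := v j (Xstar j) with hV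
    have hScard : S.card = n - 1 := by
      simp [hS, Finset.card_erase_of_mem]
    have hcard : (S.card : ℝ) = (n:ℝ) - 1 := by
      rw [hScard, Nat.cast_sub (by omega : 1 ≤ n)]
      norm_num
    have herase : ∀ i ∈ S, ((S.erase i).card : ℝ) = (S.card : ℝ) - 1 := by
      intro i hi
      rw [Finset.card_erase_of_mem hi,
        Nat.cast_sub (Finset.card_pos.mpr ⟨i, hi⟩ : 1 ≤ S.card)]
      norm_num
    have hdouble : ∑ i ∈ S, ∑ i' ∈ S.erase i, (v j (Xstar j \ I i) + v j (Xstar j \ I i'))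
        = 2 * ((S.card:ℝ) - 1) * T := by
      have hterm : ∀ i ∈ S, ∑ i' ∈ S.erase i, (v j (Xstar j \ I i) + v j (Xstar j \ I i'))
          = ((S.card:ℝ) - 1) * v j (Xstar j \ I i) + (T - v j (Xstar j \ I i)) := by
        intro i hi
        rw [Finset.sum_add_distrib, Finset.sum_const, nsmul_eq_mul, herase i hi,
          Finset.sum_erase_eq_sub hi, hT]
      rw [Finset.sum_congr rfl hterm, Finset.sum_add_distrib, Finset.sum_sub_distrib,
        ← Finset.mul_sum, Finset.sum_const, nsmul_eq_mul, hT]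
      ring
    have hlow : ((S.card:ℝ)) * ((S.card:ℝ) - 1) * V
        ≤ 2 * ((S.card:ℝ) - 1) * T := by
      rw [← hdouble]
      calc (S.card:ℝ) * ((S.card:ℝ) - 1) * V
          = ∑ i ∈ S, ((S.card:ℝ) - 1) * V := by
            rw [Finset.sum_const, nsmul_eq_mul]; ring
        _ = ∑ i ∈ S, ∑ _i' ∈ S.erase i, V := by
            refine Finset.sum_congr rfl fun i hi => ?_
            rw [Finset.sum_const, nsmul_eq_mul, herase i hi]
        _ ≤ _ := by
            refine Finset.sum_le_sum fun i hi => Finset.sum_le_sum fun i' hi' => ?_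
            exact key j i i' (Finset.ne_of_mem_erase hi').symm
    have hpos : (0:ℝ) < (S.card:ℝ) - 1 := by
      rw [hcard]
      have : (3:ℝ) ≤ (n:ℝ) := by exact_mod_cast hn
      linarith
    rw [hcard] at hlow
    rw [hcard] at hpos
    nlinarith [hlow, hpos]
  -- swap sums
  have hswap : ∑ i, ∑ j ∈ Finset.univ.erase i, v j (Xstar j \ I i)
      = ∑ j, ∑ i ∈ Finset.univ.erase j, v j (Xstar j \ I i) := by
    have h1 : ∀ (f : Fin n → Fin n → ℝ) (i : Fin n),
        ∑ j ∈ Finset.univ.erase i, f i j = ∑ j, if j ≠ i then f i j else 0 := by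
      intro f i
      rw [← Finset.sum_filter]
      congr 1
      ext x
      simp [Finset.mem_erase, and_comm]
    calc ∑ i, ∑ j ∈ Finset.univ.erase i, v j (Xstar j \ I i)
        = ∑ i, ∑ j, if j ≠ i then v j (Xstar j \ I i) else 0 := by
          exact Finset.sum_congr rfl fun i _ => h1 (fun i j => v j (Xstar j \ I i)) i
      _ = ∑ j, ∑ i, if j ≠ i then v j (Xstar j \ I i) else 0 := Finset.sum_comm
      _ = ∑ j, ∑ i ∈ Finset.univ.erase j, v j (Xstar j \ I i) := by
          refine Finset.sum_congr rfl fun j _ => ?_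
          rw [h1 (fun j i => v j (Xstar j \ I i)) j]
          refine Finset.sum_congr rfl fun i _ => ?_
          by_cases h : i = j
          · subst h; simp
          · rw [if_pos (fun hh => h hh.symm), if_pos h]
  rw [ge_iff_le, hswap]
  have hsum : ((n:ℝ) - 1) / 2 * ∑ i, v i (Xstar i)
      ≤ ∑ j, ∑ i ∈ Finset.univ.erase j, v j (Xstar j \ I i) := by
    rw [Finset.mul_sum]
    exact Finset.sum_le_sum fun j _ => per j
  have h1n : (0:ℝ) ≤ 1 / (n:ℝ) := by positivity
  calc ((n:ℝ) - 1) / (2 * n) * ∑ i, v i (Xstar i)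
      = (1 / n) * (((n:ℝ) - 1) / 2 * ∑ i, v i (Xstar i)) := by ring
    _ ≤ (1 / n) * ∑ j, ∑ i ∈ Finset.univ.erase j, v j (Xstar j \ I i) :=
        mul_le_mul_of_nonneg_left hsum h1n
end
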